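/- Let G_τ(A,C) = Σ_{y=1}^h f_y ‖m_y − Σ A C_y‖² + τ ‖A‖_F² with τ > 0. Suppose (A*, C*) satisfies the alternating least-squares fixed-point equations: C*_y = (A*ᵀ Σ² A*)^{-1} A*ᵀ Σ m_y for all y (with A*ᵀ Σ² A* invertible), and vec(A*) = (Σ_y f_y (C*_yᵀ ⊗ Σ)ᵀ (C*_yᵀ ⊗ Σ) + τ I_{pd})^{-1} Σ_y f_y (C*_yᵀ ⊗ Σ)ᵀ m_y. Then A* = 0. In particular no such (A*, C*) with A*ᵀΣ²A* invertible exists when d ≥ 1. -/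

import Mathlib

open Matrix

/-- Kronecker product `cᵀ ⊗ Σ` of a row vector with a `p × p` matrix,
as a `p × (pd)` matrix. -/
def kronRow {p d : ℕ} (c : Fin d → ℝ) (S : Matrix (Fin p) (Fin p) ℝ) :
    Matrix (Fin p) (Fin d × Fin p) ℝ :=
  Matrix.of fun i jk => c jk.1 * S i jk.2

/-- The column-stacking operator `vec`. -/
def vec {p d : ℕ} (A : Matrix (Fin p) (Fin d) ℝ) : Fin d × Fin p → ℝ :=
  fun jk => A jk.2 jk.1

lemma kronRow_mulVec_vec {p d : ℕ} (c : Fin d → ℝ) (S : Matrix (Fin p) (Fin p) ℝ)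
    (A : Matrix (Fin p) (Fin d) ℝ) :
    (kronRow c S).mulVec (_root_.vec A) = (S * A).mulVec c := by
  funext i
  simp only [kronRow, _root_.vec, Matrix.mulVec, dotProduct, Matrix.mul_apply, Matrix.of_apply,
    Fintype.sum_prod_type, Finset.sum_mul, Finset.mul_sum]
  refine Finset.sum_congr rfl fun k _ => Finset.sum_congr rfl fun j _ => by ring

lemma dot_mulVec_left {n q : Type*} [Fintype n] [Fintype q]
    (M : Matrix n q ℝ) (u : q → ℝ) (v : n → ℝ) :
    M.mulVec u ⬝ᵥ v = u ⬝ᵥ Mᵀ.mulVec v := by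
  rw [dotProduct_comm, Matrix.dotProduct_mulVec, Matrix.mulVec_transpose, dotProduct_comm]

lemma sum_mulVec' {n q h : Type*} [Fintype n] [Fintype q] [Fintype h]
    (M : h → Matrix n q ℝ) (x : q → ℝ) :
    (∑ y, M y).mulVec x = ∑ y, (M y).mulVec x := by
  funext i
  simp [Matrix.mulVec, dotProduct, Matrix.sum_apply, Finset.sum_mul, Finset.sum_apply]
  rw [Finset.sum_comm]

lemma dot_sum' {n h : Type*} [Fintype n] [Fintype h] (u : n → ℝ) (v : h → n → ℝ) :
    u ⬝ᵥ (∑ y, v y) = ∑ y, u ⬝ᵥ v y := by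
  simp [dotProduct, Finset.mul_sum, Finset.sum_apply]
  rw [Finset.sum_comm]

/-- If `(A*, C*)` satisfies the alternating least-squares fixed-point equations of the
ridge SIR criterion with `τ > 0` and `A*ᵀ Σ² A*` invertible, then `A* = 0`; in
particular no such pair exists when `d ≥ 1`. -/
theorem als_fixed_point_degenerate {p d h : ℕ} (f : Fin h → ℝ) (hf : ∀ y, 0 < f y)
    (m : Fin h → Fin p → ℝ) (S : Matrix (Fin p) (Fin p) ℝ) (hS : S.IsSymm)
    (τ : ℝ) (hτ : 0 < τ)
    (Astar : Matrix (Fin p) (Fin d) ℝ) (Cstar : Fin h → Fin d → ℝ)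
    (hinv : IsUnit (Astarᵀ * (S * S) * Astar).det)
    (hC : ∀ y, Cstar y
      = (Astarᵀ * (S * S) * Astar)⁻¹.mulVec ((Astarᵀ * S).mulVec (m y)))
    (hA : _root_.vec Astar
      = ((∑ y, f y • ((kronRow (Cstar y) S)ᵀ * kronRow (Cstar y) S))
          + τ • (1 : Matrix (Fin d × Fin p) (Fin d × Fin p) ℝ))⁻¹.mulVec
          (∑ y, f y • (kronRow (Cstar y) S)ᵀ.mulVec (m y))) :
    Astar = 0 ∧ (1 ≤ d → False) := by
  set K : Fin h → Matrix (Fin p) (Fin d × Fin p) ℝ := fun y => kronRow (Cstar y) S with hKdef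
  set M : Matrix (Fin d × Fin p) (Fin d × Fin p) ℝ :=
    (∑ y, f y • ((K y)ᵀ * K y)) + τ • (1 : Matrix (Fin d × Fin p) (Fin d × Fin p) ℝ) with hMdef
  set b : Fin d × Fin p → ℝ := ∑ y, f y • (K y)ᵀ.mulVec (m y) with hbdef
  set x : Fin d × Fin p → ℝ := _root_.vec Astar with hxdef
  set w : Fin h → Fin p → ℝ := fun y => (S * Astar).mulVec (Cstar y) with hwdef
  have hx0 : x = 0 := by
    by_cases hM : IsUnit M.det
    · have hMx : M.mulVec x = b := by
        rw [hA, Matrix.mulVec_mulVec, Matrix.mul_nonsing_inv _ hM, Matrix.one_mulVec]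
      have hC' : ∀ y, (Astarᵀ * (S * S) * Astar).mulVec (Cstar y)
          = (Astarᵀ * S).mulVec (m y) := by
        intro y
        rw [hC y, Matrix.mulVec_mulVec, Matrix.mul_nonsing_inv _ hinv, Matrix.one_mulVec]
      have hKx : ∀ y, (K y).mulVec x = w y := fun y => kronRow_mulVec_vec (Cstar y) S Astar
      have hfact : (S * Astar)ᵀ * (S * Astar) = Astarᵀ * (S * S) * Astar := by
        rw [Matrix.transpose_mul, hS.eq, Matrix.mul_assoc, Matrix.mul_assoc, Matrix.mul_assoc]
      have hterm : ∀ y, x ⬝ᵥ ((K y)ᵀ * K y).mulVec x = w y ⬝ᵥ w y := by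
        intro y
        rw [← Matrix.mulVec_mulVec, ← dot_mulVec_left, hKx y]
      have hterm2 : ∀ y, x ⬝ᵥ (K y)ᵀ.mulVec (m y) = w y ⬝ᵥ w y := by
        intro y
        rw [← dot_mulVec_left, hKx y, hwdef]
        show (S * Astar).mulVec (Cstar y) ⬝ᵥ m y = _
        rw [dot_mulVec_left, Matrix.transpose_mul, hS.eq, ← hC' y, ← hfact,
          ← Matrix.mulVec_mulVec, ← dot_mulVec_left]
      have key : (∑ y, f y * (w y ⬝ᵥ w y)) + τ * (x ⬝ᵥ x)
          = ∑ y, f y * (w y ⬝ᵥ w y) := by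
        have e1 : x ⬝ᵥ M.mulVec x = (∑ y, f y * (w y ⬝ᵥ w y)) + τ * (x ⬝ᵥ x) := by
          rw [hMdef, Matrix.add_mulVec, dotProduct_add, sum_mulVec', dot_sum',
            Matrix.smul_mulVec, Matrix.one_mulVec, dotProduct_smul, smul_eq_mul]
          congr 1
          refine Finset.sum_congr rfl fun y _ => ?_
          rw [Matrix.smul_mulVec, dotProduct_smul, smul_eq_mul, hterm y]
        have e2 : x ⬝ᵥ b = ∑ y, f y * (w y ⬝ᵥ w y) := by
          rw [hbdef, dot_sum']
          refine Finset.sum_congr rfl fun y _ => ?_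
          rw [dotProduct_smul, smul_eq_mul, hterm2 y]
        rw [← e1, ← e2, hMx]
      have hxx : x ⬝ᵥ x = 0 := by
        have h0 : τ * (x ⬝ᵥ x) = 0 := by linarith [key]
        exact (mul_eq_zero.mp h0).resolve_left (ne_of_gt hτ)
      exact dotProduct_self_eq_zero.mp hxx
    · rw [Matrix.nonsing_inv_apply_not_isUnit _ hM, Matrix.zero_mulVec] at hA
      exact hA
  have hA0 : Astar = 0 := by funext i j; exact congrFun hx0 (j, i)
  refine ⟨hA0, fun hd => ?_⟩
  haveI : Nonempty (Fin d) := ⟨⟨0, hd⟩⟩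
  rw [hA0] at hinv
  simp at hinv
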